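/- Let G be the group with presentation ⟨σ₁, σ₂ ∣ σ₁σ₂σ₁ = σ₂σ₁σ₂, (σ₁σ₂)³ = 1⟩ (the quotient of the braid group of type A₂ by its center) and let φ : G → K be a group homomorphism into a group K such that φ(σ₁) and φ(σ₂²σ₁σ₂⁻²) freely generate a free subgroup of K of rank 2. Then the subgroup of K generated by the two elements φ(σ₁) and φ(σ₂²) is isomorphic to the free product ℤ * ℤ/2ℤ. -/

import Mathlib

/-- Relators of the quotient of the braid group of type `A₂` by its center:
`σ₁σ₂σ₁σ₂⁻¹σ₁⁻¹σ₂⁻¹` and `(σ₁σ₂)³`. -/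
def A2QuotRels : Set (FreeGroup (Fin 2)) :=
  { FreeGroup.of 0 * FreeGroup.of 1 * FreeGroup.of 0 *
      (FreeGroup.of 1)⁻¹ * (FreeGroup.of 0)⁻¹ * (FreeGroup.of 1)⁻¹,
    (FreeGroup.of 0 * FreeGroup.of 1) ^ 3 }

/-- The homomorphism `Multiplicative (ZMod 2) →* K` sending the generator to an element
of square one. -/
def homOfSq {K : Type*} [Group K] (q : K) (hq : q * q = 1) :
    Multiplicative (ZMod 2) →* K where
  toFun t := q ^ (Multiplicative.toAdd t).val
  map_one' := by simp
  map_mul' a b := by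
    have h2 : ∀ c : ZMod 2, c = 0 ∨ c = 1 := by decide
    rcases h2 a.toAdd with h | h <;> rcases h2 b.toAdd with h' | h' <;>
      simp [toAdd_mul, h, h', show ((0 : ZMod 2) + 0).val = 0 from rfl,
        show ((0 : ZMod 2) + 1).val = 1 from rfl, show ((1 : ZMod 2) + 0).val = 1 from rfl,
        show ((1 : ZMod 2) + 1).val = 0 from rfl, show ((0 : ZMod 2)).val = 0 from rfl,
        show ((1 : ZMod 2)).val = 1 from rfl, pow_succ, hq]

lemma homOfSq_apply {K : Type*} [Group K] (q : K) (hq : q * q = 1) :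
    homOfSq q hq (Multiplicative.ofAdd 1) = q := by
  show q ^ ((1 : ZMod 2)).val = q
  rw [show ((1 : ZMod 2)).val = 1 from rfl, pow_one]

open Monoid in
/-- The key abstract lemma: if `q² = 1` and `x`, `qxq` freely generate a free group, then
there is an injective homomorphism `ℤ * ℤ/2 →* K` with range `⟨x, q⟩`. -/
lemma coprod_hom_of_free {K : Type*} [Group K] (x q : K) (hq : q * q = 1)
    (hf : Function.Injective (FreeGroup.lift (![x, q * x * q] : Fin 2 → K))) :
    ∃ ψ : Coprod (Multiplicative ℤ) (Multiplicative (ZMod 2)) →* K,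
      Function.Injective ψ ∧ ψ.range = Subgroup.closure {x, q} := by
  classical
  set C := Coprod (Multiplicative ℤ) (Multiplicative (ZMod 2))
  set u : C := Coprod.inl (Multiplicative.ofAdd (1 : ℤ)) with hu_def
  set v : C := Coprod.inr (Multiplicative.ofAdd (1 : ZMod 2)) with hv_def
  have hv : v * v = 1 := by
    rw [hv_def, ← map_mul, ← ofAdd_add, show (1 : ZMod 2) + 1 = 0 from rfl]
    simp
  have hvinv : v⁻¹ = v := by
    rw [inv_eq_iff_mul_eq_one, hv]
  have hqinv : q⁻¹ = q := by
    rw [inv_eq_iff_mul_eq_one, hq]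
  set ψ : C →* K := Coprod.lift (zpowersHom K x) (homOfSq q hq) with hψ_def
  have hψu : ψ u = x := by
    rw [hu_def, hψ_def, Coprod.lift_apply_inl, zpowersHom_apply]
    simp
  have hψv : ψ v = q := by
    rw [hv_def, hψ_def, Coprod.lift_apply_inr, homOfSq_apply]
  set f : FreeGroup (Fin 2) →* C := FreeGroup.lift (![u, v * u * v] : Fin 2 → C) with hf_def
  set L : FreeGroup (Fin 2) →* K := FreeGroup.lift (![x, q * x * q] : Fin 2 → K) with hL_def
  have hψf : ∀ m, ψ (f m) = L m := by
    intro m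
    have : ψ.comp f = L := by
      apply FreeGroup.ext_hom
      intro a
      fin_cases a <;>
        simp [hf_def, hL_def, map_mul, hψu, hψv]
    exact DFunLike.congr_fun this m
  -- conjugation by v preserves the range of f
  have hf0 : f (FreeGroup.of 0) = u := by simp [hf_def]
  have hf1 : f (FreeGroup.of 1) = v * u * v := by simp [hf_def]
  set ρ : FreeGroup (Fin 2) →* FreeGroup (Fin 2) :=
    FreeGroup.lift (![FreeGroup.of 1, FreeGroup.of 0] : Fin 2 → FreeGroup (Fin 2)) with hρ_def
  have hρ0 : ρ (FreeGroup.of 0) = FreeGroup.of 1 := by simp [hρ_def]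
  have hρ1 : ρ (FreeGroup.of 1) = FreeGroup.of 0 := by simp [hρ_def]
  have hconj : ∀ m : FreeGroup (Fin 2), v * f m * v = f (ρ m) := by
    have hhom : ((MulAut.conj v).toMonoidHom.comp f : FreeGroup (Fin 2) →* C) = f.comp ρ := by
      apply FreeGroup.ext_hom
      intro a
      fin_cases a
      · show v * f (FreeGroup.of 0) * v⁻¹ = f (ρ (FreeGroup.of 0))
        rw [hvinv, hf0, hρ0, hf1]
      · show v * f (FreeGroup.of 1) * v⁻¹ = f (ρ (FreeGroup.of 1))
        rw [hvinv, hf1, hρ1, hf0]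
        calc v * (v * u * v) * v = (v * v) * u * (v * v) := by group
          _ = u := by rw [hv, one_mul, mul_one]
    intro m
    have h2 := DFunLike.congr_fun hhom m
    simp only [MonoidHom.comp_apply, MulEquiv.coe_toMonoidHom, MulAut.conj_apply, hvinv] at h2
    rw [← h2]
  -- every element of C is n or v * n with n in the range of f
  have hcover : ∀ c : C, c ∈ f.range ∨ ∃ n ∈ f.range, c = v * n := by
    intro c
    have hc : c ∈ Subgroup.closure
        (Set.range (Coprod.inl : Multiplicative ℤ →* C) ∪
          Set.range (Coprod.inr : Multiplicative (ZMod 2) →* C)) := by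
      rw [Coprod.closure_range_inl_union_inr]; trivial
    have hu_mem : u ∈ f.range := ⟨FreeGroup.of 0, by simp [hf_def]⟩
    induction hc using Subgroup.closure_induction with
    | mem g hg =>
      rcases hg with ⟨m, rfl⟩ | ⟨m, rfl⟩
      · left
        have : Coprod.inl m = u ^ (Multiplicative.toAdd m) := by
          rw [hu_def, ← map_zpow]
          congr 1
          rw [← ofAdd_zsmul, smul_eq_mul, mul_one, ofAdd_toAdd]
        rw [this]
        exact zpow_mem hu_mem _
      · have h2 : ∀ c : ZMod 2, c = 0 ∨ c = 1 := by decide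
        rcases h2 m.toAdd with h | h
        · left
          have : m = 1 := by
            rw [← ofAdd_toAdd m, h]; rfl
          rw [this, map_one]
          exact one_mem _
        · right
          refine ⟨1, one_mem _, ?_⟩
          have : m = Multiplicative.ofAdd (1 : ZMod 2) := by
            rw [← ofAdd_toAdd m, h]
          rw [this, mul_one, hv_def]
    | one => left; exact one_mem _
    | mul a b _ _ ha hb =>
      rcases ha with ha | ⟨n₁, hn₁, rfl⟩ <;> rcases hb with hb | ⟨n₂, hn₂, rfl⟩
      · left; exact mul_mem ha hb
      · right
        obtain ⟨m₁, rfl⟩ := ha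
        refine ⟨(v * f m₁ * v) * n₂, mul_mem (by rw [hconj]; exact ⟨_, rfl⟩) hn₂, ?_⟩
        calc f m₁ * (v * n₂) = (v * v) * (f m₁ * (v * n₂)) := by rw [hv, one_mul]
          _ = v * (v * f m₁ * v * n₂) := by group
      · right
        exact ⟨n₁ * b, mul_mem hn₁ hb, by group⟩
      · left
        obtain ⟨m₁, rfl⟩ := hn₁
        have : (v * f m₁) * (v * n₂) = (v * f m₁ * v) * n₂ := by group
        rw [this, hconj]
        exact mul_mem ⟨_, rfl⟩ hn₂
    | inv a _ ha =>
      rcases ha with ha | ⟨n, hn, rfl⟩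
      · left; exact inv_mem ha
      · right
        obtain ⟨m, rfl⟩ := hn
        refine ⟨v * (f m)⁻¹ * v, by rw [← map_inv, hconj]; exact ⟨_, rfl⟩, ?_⟩
        calc (v * f m)⁻¹ = (f m)⁻¹ * v⁻¹ := mul_inv_rev _ _
          _ = (v * v) * ((f m)⁻¹ * v) := by rw [hv, one_mul, hvinv]
          _ = v * (v * (f m)⁻¹ * v) := by group
  -- injectivity
  have hinj : Function.Injective ψ := by
    rw [injective_iff_map_eq_one]
    intro c hc
    rcases hcover c with ⟨m, rfl⟩ | ⟨n, ⟨m, rfl⟩, rfl⟩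
    · rw [hψf] at hc
      have : m = 1 := hf (by rw [hc, map_one])
      rw [this, map_one]
    · exfalso
      rw [map_mul, hψf, hψv] at hc
      have hLm : L m = q := by
        rw [← hqinv]
        exact eq_inv_of_mul_eq_one_right hc
      have hkey : m * FreeGroup.of 0 * m = FreeGroup.of 1 := by
        apply hf
        have h0 : L (FreeGroup.of 0) = x := by simp [hL_def]
        have h1 : L (FreeGroup.of 1) = q * x * q := by simp [hL_def]
        rw [map_mul, map_mul, hLm, h0, h1]
      set χ : FreeGroup (Fin 2) →* Multiplicative ℤ :=
        FreeGroup.lift (![Multiplicative.ofAdd (1 : ℤ), 1] : Fin 2 → Multiplicative ℤ) with hχ_def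
      have := congrArg χ hkey
      rw [map_mul, map_mul] at this
      have hχ0 : χ (FreeGroup.of 0) = Multiplicative.ofAdd (1 : ℤ) := by simp [hχ_def]
      have hχ1 : χ (FreeGroup.of 1) = 1 := by simp [hχ_def]
      rw [hχ0, hχ1] at this
      have := congrArg Multiplicative.toAdd this
      simp only [toAdd_mul, toAdd_ofAdd, toAdd_one] at this
      omega
  refine ⟨ψ, hinj, ?_⟩
  apply le_antisymm
  · rw [hψ_def, Coprod.range_lift]
    apply sup_le
    · rintro _ ⟨m, rfl⟩
      rw [zpowersHom_apply]
      exact zpow_mem (Subgroup.subset_closure (by left; rfl)) _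
    · rintro _ ⟨m, rfl⟩
      show q ^ (Multiplicative.toAdd m).val ∈ _
      exact pow_mem (Subgroup.subset_closure (by right; rfl)) _
  · rw [Subgroup.closure_le]
    rintro c (rfl | rfl)
    · exact ⟨u, hψu⟩
    · exact ⟨v, hψv⟩

open Monoid in
theorem stmt_7 {K : Type*} [Group K] (φ : PresentedGroup A2QuotRels →* K)
    (hfree : Function.Injective (FreeGroup.lift
      (![φ (PresentedGroup.of 0),
         φ (PresentedGroup.of 1 ^ 2 * PresentedGroup.of 0 * (PresentedGroup.of 1 ^ 2)⁻¹)] :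
        Fin 2 → K))) :
    Nonempty
      ((Subgroup.closure {φ (PresentedGroup.of 0), φ (PresentedGroup.of 1 ^ 2)} : Subgroup K) ≃*
        Coprod (Multiplicative ℤ) (Multiplicative (ZMod 2))) := by
  classical
  set s : PresentedGroup A2QuotRels := PresentedGroup.of 0 with hs_def
  set t : PresentedGroup A2QuotRels := PresentedGroup.of 1 with ht_def
  have key : ∀ r ∈ A2QuotRels, PresentedGroup.mk A2QuotRels r = 1 := by
    intro r hr
    exact (QuotientGroup.eq_one_iff r).mpr (Subgroup.subset_normalClosure hr)
  have hr1 : s * t * s * t⁻¹ * s⁻¹ * t⁻¹ = 1 := by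
    have := key _ (Set.mem_insert _ _)
    simp only [map_mul, map_inv] at this
    exact this
  have hr2 : (s * t) ^ 3 = 1 := by
    have := key _ (Set.mem_insert_of_mem _ rfl)
    simp only [map_mul, map_pow] at this
    exact this
  have h1 : s * t * s = t * s * t := by
    rw [← mul_inv_eq_one]
    calc s * t * s * (t * s * t)⁻¹ = s * t * s * t⁻¹ * s⁻¹ * t⁻¹ := by group
      _ = 1 := hr1
  have hG : (s * t ^ 2) * (s * t ^ 2) = 1 := by
    calc (s * t ^ 2) * (s * t ^ 2) = s * t * (t * s * t) * t := by
          simp [pow_succ, mul_assoc]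
      _ = s * t * (s * t * s) * t := by rw [← h1]
      _ = (s * t) ^ 3 := by simp [pow_succ, mul_assoc]
      _ = 1 := hr2
  set x : K := φ s with hx_def
  set y : K := φ (t ^ 2) with hy_def
  set q : K := x * y with hq_def
  have hqK : q * q = 1 := by
    have h := congrArg φ hG
    rw [map_one, map_mul, map_mul] at h
    rw [hq_def, hx_def, hy_def]
    exact h
  have hqinv : q⁻¹ = q := by rw [inv_eq_iff_mul_eq_one, hqK]
  set z : K := y * x * y⁻¹ with hz_def
  have hφz : φ (t ^ 2 * s * (t ^ 2)⁻¹) = z := by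
    rw [hz_def, hy_def, hx_def, map_mul, map_mul, map_inv]
  have hfz : Function.Injective (FreeGroup.lift (![x, z] : Fin 2 → K)) := by
    have hvec : (![φ s, φ (t ^ 2 * s * (t ^ 2)⁻¹)] : Fin 2 → K) = ![x, z] := by
      rw [hφz, ← hx_def]
    rwa [hvec] at hfree
  -- Nielsen transformation: x, x z x⁻¹ also freely generate
  have hfz2 : Function.Injective (FreeGroup.lift (![x, q * x * q] : Fin 2 → K)) := by
    have hqxq : q * x * q = x * z * x⁻¹ := by
      have h1 : x * z * x⁻¹ = q * x * q⁻¹ := by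
        rw [hq_def, hz_def]; group
      rw [h1, hqinv]
    set θ : FreeGroup (Fin 2) →* FreeGroup (Fin 2) :=
      FreeGroup.lift (![FreeGroup.of 0, FreeGroup.of 0 * FreeGroup.of 1 * (FreeGroup.of 0)⁻¹] :
        Fin 2 → FreeGroup (Fin 2)) with hθ_def
    set θ' : FreeGroup (Fin 2) →* FreeGroup (Fin 2) :=
      FreeGroup.lift (![FreeGroup.of 0, (FreeGroup.of 0)⁻¹ * FreeGroup.of 1 * FreeGroup.of 0] :
        Fin 2 → FreeGroup (Fin 2)) with hθ'_def
    have hθθ : θ'.comp θ = MonoidHom.id _ := by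
      apply FreeGroup.ext_hom
      intro a
      fin_cases a <;> simp [hθ_def, hθ'_def, map_mul, map_inv, mul_assoc]
    have hθinj : Function.Injective θ := by
      intro a b h
      have ha := DFunLike.congr_fun hθθ a
      have hb := DFunLike.congr_fun hθθ b
      simp only [MonoidHom.comp_apply, MonoidHom.id_apply] at ha hb
      rw [← ha, ← hb, h]
    have hcomp : (FreeGroup.lift (![x, z] : Fin 2 → K)).comp θ
        = FreeGroup.lift (![x, q * x * q] : Fin 2 → K) := by
      apply FreeGroup.ext_hom
      intro a
      fin_cases a <;> simp [hθ_def, hqxq]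
    rw [← hcomp]
    exact hfz.comp hθinj
  obtain ⟨ψ, hinj, hrange⟩ := coprod_hom_of_free x q hqK hfz2
  have hcl : Subgroup.closure ({x, y} : Set K) = Subgroup.closure {x, q} := by
    apply le_antisymm
    · rw [Subgroup.closure_le]
      rintro c (rfl | rfl)
      · exact Subgroup.subset_closure (by left; rfl)
      · have : y = x⁻¹ * q := by rw [hq_def]; group
        rw [this]
        exact mul_mem (inv_mem (Subgroup.subset_closure (by left; rfl)))
          (Subgroup.subset_closure (by right; rfl))
    · rw [Subgroup.closure_le]
      rintro c (rfl | rfl)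
      · exact Subgroup.subset_closure (by left; rfl)
      · rw [hq_def]
        exact mul_mem (Subgroup.subset_closure (by left; rfl))
          (Subgroup.subset_closure (by right; rfl))
  have hEq : Subgroup.closure ({x, y} : Set K) = ψ.range := by rw [hcl, hrange]
  exact ⟨(MulEquiv.subgroupCongr hEq).trans (MonoidHom.ofInjective hinj).symm⟩
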